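/- For n ≥ 0, the number of Fishburn permutations of length n avoiding the classical patterns 321, 2143, and 3124 equals C(n,2) + 1. -/

import Mathlib

set_option maxHeartbeats 1000000

/-- A permutation `π` of `Fin n` contains the classical pattern `p` (given as a
function `Fin k → ℕ` listing the pattern's entries). -/
def Contains {n k : ℕ} (π : Equiv.Perm (Fin n)) (p : Fin k → ℕ) : Prop :=
  ∃ f : Fin k → Fin n, StrictMono f ∧ ∀ i j, p i < p j ↔ π (f i) < π (f j)

/-- Classical pattern avoidance. -/
def Avoids {n k : ℕ} (π : Equiv.Perm (Fin n)) (p : Fin k → ℕ) : Prop :=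
  ¬ Contains π p

/-- A permutation is Fishburn if there are no indices `i < j` with
`π i, π (i+1), π j` forming a 231 pattern and `π i = π j + 1`. -/
def IsFishburn {n : ℕ} (π : Equiv.Perm (Fin n)) : Prop :=
  ¬ ∃ (i j : ℕ) (hij : i + 1 < j) (hj : j < n),
      π ⟨i, by omega⟩ < π ⟨i + 1, by omega⟩ ∧
      π ⟨j, hj⟩ < π ⟨i, by omega⟩ ∧
      (π ⟨i, by omega⟩ : ℕ) = (π ⟨j, hj⟩ : ℕ) + 1

def Fv (n i v t : ℕ) : ℕ :=
  if t < i then t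
  else if t = i then v
  else if t = i+1 then i
  else if t < i + 2 + (n - 1 - v) then v + (t - i - 1)
  else t - (n - v)

lemma Fv_spec (n i v t : ℕ) (hi : i < v) (hv : v < n) (ht : t < n) :
    (t < i ∧ Fv n i v t = t) ∨ (t = i ∧ Fv n i v t = v) ∨ (t = i+1 ∧ Fv n i v t = i) ∨
    (i+2 ≤ t ∧ t < i+2+(n-1-v) ∧ Fv n i v t = v + (t - i - 1)) ∨
    (i+2+(n-1-v) ≤ t ∧ Fv n i v t = t - (n - v)) := by
  simp only [Fv]; split_ifs <;> omega

def sigmaP (n i v : ℕ) (hi : i < v) (hv : v < n) : Equiv.Perm (Fin n) where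
  toFun t := ⟨Fv n i v t, by have := t.2; simp only [Fv]; split_ifs <;> omega⟩
  invFun w := ⟨if (w:ℕ) < i then w else if (w:ℕ) = i then i+1 else if (w:ℕ) = v then i
      else if v < (w:ℕ) then (w:ℕ) - v + i + 1 else w + (n - v), by
    have := w.2; split_ifs <;> omega⟩
  left_inv t := by have := t.2; ext; simp only [Fv]; split_ifs <;> omega
  right_inv w := by have := w.2; ext; simp only [Fv]; split_ifs <;> omega

lemma sigmaP_apply (n i v : ℕ) (hi : i < v) (hv : v < n) (t : Fin n) :
    (sigmaP n i v hi hv t : ℕ) = Fv n i v t := rfl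


section VecLemmas
variable {α : Type*} (a b c d : α)
lemma v3_0 (h : 0 < 3) : ![a,b,c] ⟨0,h⟩ = a := rfl
lemma v3_1 (h : 1 < 3) : ![a,b,c] ⟨1,h⟩ = b := rfl
lemma v3_2 (h : 2 < 3) : ![a,b,c] ⟨2,h⟩ = c := rfl
lemma v4_0 (h : 0 < 4) : ![a,b,c,d] ⟨0,h⟩ = a := rfl
lemma v4_1 (h : 1 < 4) : ![a,b,c,d] ⟨1,h⟩ = b := rfl
lemma v4_2 (h : 2 < 4) : ![a,b,c,d] ⟨2,h⟩ = c := rfl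
lemma v4_3 (h : 3 < 4) : ![a,b,c,d] ⟨3,h⟩ = d := rfl
end VecLemmas


lemma mk_321 {n : ℕ} (π : Equiv.Perm (Fin n)) (a b c : Fin n) (hab : a < b) (hbc : b < c)
    (h1 : π b < π a) (h2 : π c < π b) : Contains π ![3,2,1] := by
  have hab' := Fin.lt_def.mp hab
  have hbc' := Fin.lt_def.mp hbc
  have h1' := Fin.lt_def.mp h1
  have h2' := Fin.lt_def.mp h2
  refine ⟨![a,b,c], ?_, ?_⟩
  · intro i j hij
    have hij' := Fin.lt_def.mp hij
    fin_cases i <;> fin_cases j <;>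
      simp only [v3_0, v3_1, v3_2, Fin.lt_def] at hij' ⊢ <;> omega
  · intro i j
    fin_cases i <;> fin_cases j <;>
      simp only [v3_0, v3_1, v3_2, Fin.lt_def] <;> omega

lemma mk_2143 {n : ℕ} (π : Equiv.Perm (Fin n)) (a b c d : Fin n)
    (hab : a < b) (hbc : b < c) (hcd : c < d)
    (h1 : π b < π a) (h2 : π a < π d) (h3 : π d < π c) : Contains π ![2,1,4,3] := by
  have hab' := Fin.lt_def.mp hab
  have hbc' := Fin.lt_def.mp hbc
  have hcd' := Fin.lt_def.mp hcd
  have h1' := Fin.lt_def.mp h1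
  have h2' := Fin.lt_def.mp h2
  have h3' := Fin.lt_def.mp h3
  refine ⟨![a,b,c,d], ?_, ?_⟩
  · intro i j hij
    have hij' := Fin.lt_def.mp hij
    fin_cases i <;> fin_cases j <;>
      simp only [v4_0, v4_1, v4_2, v4_3, Fin.lt_def] at hij' ⊢ <;> omega
  · intro i j
    fin_cases i <;> fin_cases j <;>
      simp only [v4_0, v4_1, v4_2, v4_3, Fin.lt_def] <;> omega

lemma mk_3124 {n : ℕ} (π : Equiv.Perm (Fin n)) (a b c d : Fin n)
    (hab : a < b) (hbc : b < c) (hcd : c < d)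
    (h1 : π b < π c) (h2 : π c < π a) (h3 : π a < π d) : Contains π ![3,1,2,4] := by
  have hab' := Fin.lt_def.mp hab
  have hbc' := Fin.lt_def.mp hbc
  have hcd' := Fin.lt_def.mp hcd
  have h1' := Fin.lt_def.mp h1
  have h2' := Fin.lt_def.mp h2
  have h3' := Fin.lt_def.mp h3
  refine ⟨![a,b,c,d], ?_, ?_⟩
  · intro i j hij
    have hij' := Fin.lt_def.mp hij
    fin_cases i <;> fin_cases j <;>
      simp only [v4_0, v4_1, v4_2, v4_3, Fin.lt_def] at hij' ⊢ <;> omega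
  · intro i j
    fin_cases i <;> fin_cases j <;>
      simp only [v4_0, v4_1, v4_2, v4_3, Fin.lt_def] <;> omega


lemma un_321 {n : ℕ} (π : Equiv.Perm (Fin n)) (h : Contains π ![3,2,1]) :
    ∃ a b c : Fin n, a < b ∧ b < c ∧ π b < π a ∧ π c < π b := by
  obtain ⟨f, hf, hp⟩ := h
  exact ⟨f 0, f 1, f 2, hf (by decide), hf (by decide),
    (hp 1 0).mp (by norm_num), (hp 2 1).mp (by decide)⟩

lemma un_2143 {n : ℕ} (π : Equiv.Perm (Fin n)) (h : Contains π ![2,1,4,3]) :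
    ∃ a b c d : Fin n, a < b ∧ b < c ∧ c < d ∧ π b < π a ∧ π a < π d ∧ π d < π c := by
  obtain ⟨f, hf, hp⟩ := h
  exact ⟨f 0, f 1, f 2, f 3, hf (by decide), hf (by decide), hf (by decide),
    (hp 1 0).mp (by norm_num), (hp 0 3).mp (by decide), (hp 3 2).mp (by decide)⟩

lemma un_3124 {n : ℕ} (π : Equiv.Perm (Fin n)) (h : Contains π ![3,1,2,4]) :
    ∃ a b c d : Fin n, a < b ∧ b < c ∧ c < d ∧ π b < π c ∧ π c < π a ∧ π a < π d := by
  obtain ⟨f, hf, hp⟩ := h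
  exact ⟨f 0, f 1, f 2, f 3, hf (by decide), hf (by decide), hf (by decide),
    (hp 1 2).mp (by decide), (hp 2 0).mp (by decide), (hp 0 3).mp (by decide)⟩


lemma sigmaP_fishburn (n i v : ℕ) (hi : i < v) (hv : v < n) :
    IsFishburn (sigmaP n i v hi hv) := by
  rintro ⟨a, j, haj, hj, h1, h2, h3⟩
  rw [Fin.lt_def] at h1 h2
  simp only [sigmaP_apply] at h1 h2 h3
  have Ha := Fv_spec n i v a hi hv (by omega)
  have Hb := Fv_spec n i v (a+1) hi hv (by omega)
  have Hj := Fv_spec n i v j hi hv hj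
  omega

lemma sigmaP_av321 (n i v : ℕ) (hi : i < v) (hv : v < n) :
    Avoids (sigmaP n i v hi hv) ![3,2,1] := by
  intro h
  obtain ⟨a, b, c, hab, hbc, h1, h2⟩ := un_321 _ h
  rw [Fin.lt_def] at hab hbc h1 h2
  have ha := a.2; have hb := b.2; have hc := c.2
  simp only [sigmaP_apply] at h1 h2
  have Ha := Fv_spec n i v a hi hv a.2
  have Hb := Fv_spec n i v b hi hv b.2
  have Hc := Fv_spec n i v c hi hv c.2
  omega

lemma sigmaP_av2143 (n i v : ℕ) (hi : i < v) (hv : v < n) :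
    Avoids (sigmaP n i v hi hv) ![2,1,4,3] := by
  intro h
  obtain ⟨a, b, c, d, hab, hbc, hcd, h1, h2, h3⟩ := un_2143 _ h
  rw [Fin.lt_def] at hab hbc hcd h1 h2 h3
  have ha := a.2; have hb := b.2; have hc := c.2; have hd := d.2
  simp only [sigmaP_apply] at h1 h2 h3
  have Ha := Fv_spec n i v a hi hv a.2
  have Hb := Fv_spec n i v b hi hv b.2
  have Hc := Fv_spec n i v c hi hv c.2
  have Hd := Fv_spec n i v d hi hv d.2
  omega

lemma sigmaP_av3124 (n i v : ℕ) (hi : i < v) (hv : v < n) :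
    Avoids (sigmaP n i v hi hv) ![3,1,2,4] := by
  intro h
  obtain ⟨a, b, c, d, hab, hbc, hcd, h1, h2, h3⟩ := un_3124 _ h
  rw [Fin.lt_def] at hab hbc hcd h1 h2 h3
  have ha := a.2; have hb := b.2; have hc := c.2; have hd := d.2
  simp only [sigmaP_apply] at h1 h2 h3
  have Ha := Fv_spec n i v a hi hv a.2
  have Hb := Fv_spec n i v b hi hv b.2
  have Hc := Fv_spec n i v c hi hv c.2
  have Hd := Fv_spec n i v d hi hv d.2
  omega


lemma mem_char {n : ℕ} (π : Equiv.Perm (Fin n)) (hfb : IsFishburn π)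
    (h321 : Avoids π ![3,2,1]) (h2143 : Avoids π ![2,1,4,3]) (h3124 : Avoids π ![3,1,2,4])
    (hne : π ≠ 1) :
    ∃ (i v : ℕ) (hi : i < v) (hv : v < n), π = sigmaP n i v hi hv := by
  classical
  set P : ℕ → ℕ := fun t => if h : t < n then (π ⟨t, h⟩ : ℕ) else t with hP
  have hPdef : ∀ t (h : t < n), P t = (π ⟨t, h⟩ : ℕ) := fun t h => dif_pos h
  have Pin : ∀ t, t < n → P t < n := by
    intro t h; rw [hPdef t h]; exact (π ⟨t, h⟩).2
  have Pinj : ∀ a b, a < n → b < n → P a = P b → a = b := by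
    intro a b ha hb hab
    rw [hPdef a ha, hPdef b hb] at hab
    have := π.injective (Fin.ext hab)
    exact congrArg Fin.val this
  have Psurj : ∀ w, w < n → ∃ t, t < n ∧ P t = w := by
    intro w hw
    refine ⟨(π.symm ⟨w, hw⟩ : ℕ), (π.symm ⟨w, hw⟩).2, ?_⟩
    rw [hPdef _ (π.symm ⟨w, hw⟩).2]
    simp
  have fish : ∀ a j, a + 1 < j → j < n → P a < P (a+1) → P j < P a → P a ≠ P j + 1 := by
    intro a j haj hj h1 h2 h3
    exact hfb ⟨a, j, haj, hj, by
      rw [hPdef a (by omega), hPdef (a+1) (by omega)] at h1; exact Fin.lt_def.mpr h1, by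
      rw [hPdef a (by omega), hPdef j hj] at h2; exact Fin.lt_def.mpr h2, by
      rw [hPdef a (by omega), hPdef j hj] at h3; exact h3⟩
  have n321 : ∀ a b c, a < b → b < c → c < n → P b < P a → P c < P b → False := by
    intro a b c hab hbc hc h1 h2
    refine h321 (mk_321 π ⟨a, by omega⟩ ⟨b, by omega⟩ ⟨c, hc⟩
      (Fin.mk_lt_mk.mpr hab) (Fin.mk_lt_mk.mpr hbc) ?_ ?_)
    · rw [hPdef a (by omega), hPdef b (by omega)] at h1; exact Fin.lt_def.mpr h1
    · rw [hPdef b (by omega), hPdef c hc] at h2; exact Fin.lt_def.mpr h2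
  have n2143 : ∀ a b c d, a < b → b < c → c < d → d < n →
      P b < P a → P a < P d → P d < P c → False := by
    intro a b c d hab hbc hcd hd h1 h2 h3
    refine h2143 (mk_2143 π ⟨a, by omega⟩ ⟨b, by omega⟩ ⟨c, by omega⟩ ⟨d, hd⟩
      (Fin.mk_lt_mk.mpr hab) (Fin.mk_lt_mk.mpr hbc) (Fin.mk_lt_mk.mpr hcd) ?_ ?_ ?_)
    · rw [hPdef a (by omega), hPdef b (by omega)] at h1; exact Fin.lt_def.mpr h1
    · rw [hPdef a (by omega), hPdef d hd] at h2; exact Fin.lt_def.mpr h2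
    · rw [hPdef c (by omega), hPdef d hd] at h3; exact Fin.lt_def.mpr h3
  have n3124 : ∀ a b c d, a < b → b < c → c < d → d < n →
      P b < P c → P c < P a → P a < P d → False := by
    intro a b c d hab hbc hcd hd h1 h2 h3
    refine h3124 (mk_3124 π ⟨a, by omega⟩ ⟨b, by omega⟩ ⟨c, by omega⟩ ⟨d, hd⟩
      (Fin.mk_lt_mk.mpr hab) (Fin.mk_lt_mk.mpr hbc) (Fin.mk_lt_mk.mpr hcd) ?_ ?_ ?_)
    · rw [hPdef b (by omega), hPdef c (by omega)] at h1; exact Fin.lt_def.mpr h1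
    · rw [hPdef a (by omega), hPdef c (by omega)] at h2; exact Fin.lt_def.mpr h2
    · rw [hPdef a (by omega), hPdef d hd] at h3; exact Fin.lt_def.mpr h3
  -- existence of a non-fixed point
  have hex : ∃ t, t < n ∧ P t ≠ t := by
    by_contra hc
    push_neg at hc
    exact hne (Equiv.ext fun x => Fin.ext (by
      have := hc x.1 x.2
      rw [hPdef x.1 x.2] at this
      simpa using this))
  obtain ⟨i, hispec, hmin'⟩ : ∃ i, (i < n ∧ P i ≠ i) ∧ ∀ t, t < i → ¬(t < n ∧ P t ≠ t) :=
    ⟨Nat.find hex, Nat.find_spec hex, fun t ht => Nat.find_min hex ht⟩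
  obtain ⟨hi_lt, hPi⟩ := hispec
  have hmin : ∀ t, t < i → P t = t := fun t ht => by
    have := hmin' t ht; push_neg at this; exact this (by omega)
  obtain ⟨v, hvdef⟩ : ∃ v, P i = v := ⟨_, rfl⟩
  have hv : v < n := hvdef ▸ Pin i hi_lt
  have hiv : i < v := by
    rcases Nat.lt_trichotomy v i with h | h | h
    · have h1 := hmin v h
      have := Pinj v i (by omega) hi_lt (by rw [h1, hvdef])
      omega
    · omega
    · exact h
  have hi1n : i + 1 < n := by omega
  -- positions of values ≥ i (other than v) are ≥ i+1
  have pos : ∀ w, i ≤ w → w < n → w ≠ v → ∃ t, i+1 ≤ t ∧ t < n ∧ P t = w := by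
    intro w hw hwn hwv
    obtain ⟨t, htn, hPt⟩ := Psurj w hwn
    refine ⟨t, ?_, htn, hPt⟩
    rcases Nat.lt_trichotomy t i with h | h | h
    · have := hmin t h; omega
    · subst h; omega
    · omega
  -- Claim A : P (i+1) = i
  have hPsucc : P (i+1) = i := by
    have hwn : P (i+1) < n := Pin _ hi1n
    have hwv : P (i+1) ≠ v := fun h => by
      have := Pinj (i+1) i hi1n hi_lt (h.trans hvdef.symm)
      omega
    have hwge : i ≤ P (i+1) := by
      by_contra h
      push_neg at h
      have h1 := hmin (P (i+1)) h
      have := Pinj (P (i+1)) (i+1) (by omega) hi1n h1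
      omega
    by_contra hwi
    obtain ⟨p, hp1, hpn, hPp⟩ := pos i le_rfl hi_lt (by omega)
    have hpne : p ≠ i + 1 := fun h => by rw [h] at hPp; omega
    have hp2 : i + 2 ≤ p := by omega
    rcases Nat.lt_or_ge v (P (i+1)) with hcase | hcase
    · -- P (i+1) > v : Fishburn violation with value v - 1
      obtain ⟨q, hq1, hqn, hPq⟩ := pos (v-1) (by omega) (by omega) (by omega)
      have hqne : q ≠ i + 1 := fun h => by rw [h] at hPq; omega
      exact fish i q (by omega) hqn (by omega) (by omega) (by omega)
    · -- i < P (i+1) < v : 321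
      exact n321 i (i+1) p (by omega) (by omega) hpn (by omega) (by omega)
  -- values at positions ≥ i+2 are > i and ≠ v
  have valgt : ∀ a, i+2 ≤ a → a < n → i < P a ∧ P a ≠ v ∧ P a < n := by
    intro a ha han
    have h1 : P a ≠ v := fun h => by
      have := Pinj a i han hi_lt (h.trans hvdef.symm)
      omega
    have h2 : P a ≠ i := fun h => by
      have := Pinj a (i+1) han hi1n (h.trans hPsucc.symm)
      omega
    have h3 : ¬ P a < i := fun h => by
      have h4 := hmin (P a) h
      have := Pinj (P a) a (by omega) han h4
      omega
    exact ⟨by omega, h1, Pin a han⟩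
  -- monotonicity constraints
  have B1 : ∀ a b, i+2 ≤ a → a < b → b < n → P a < v → P b < v → P a < P b := by
    intro a b ha hab hbn h1 h2
    rcases Nat.lt_trichotomy (P a) (P b) with h | h | h
    · exact h
    · exact absurd (Pinj a b (by omega) hbn h) (by omega)
    · exact absurd (n321 i a b (by omega) hab hbn (by omega) h) not_false
  have B2 : ∀ a b, i+2 ≤ a → a < b → b < n → v < P a → v < P b → P a < P b := by
    intro a b ha hab hbn h1 h2
    rcases Nat.lt_trichotomy (P a) (P b) with h | h | h
    · exact h
    · exact absurd (Pinj a b (by omega) hbn h) (by omega)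
    · exact absurd (n2143 i (i+1) a b (by omega) (by omega) hab hbn (by omega) (by omega) h)
        not_false
  have B3 : ∀ a b, i+2 ≤ a → a < b → b < n → P a < v → v < P b → False := by
    intro a b ha hab hbn h1 h2
    have := valgt a ha (by omega)
    exact n3124 i (i+1) a b (by omega) (by omega) hab hbn (by omega) (by omega) (by omega)
  refine ⟨i, v, hiv, hv, ?_⟩
  have hfmono : StrictMono (fun k : Fin (n - (i+2)) =>
      if v < P (i + 2 + (k:ℕ)) then P (i + 2 + (k:ℕ)) - v else P (i + 2 + (k:ℕ)) + (n - v)) := by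
    intro k k' hkk
    have hkk' := Fin.lt_def.mp hkk
    have hk := k.2; have hk' := k'.2
    have h1 := valgt (i+2+(k:ℕ)) (by omega) (by omega)
    have h2 := valgt (i+2+(k':ℕ)) (by omega) (by omega)
    have b1 := B1 (i+2+(k:ℕ)) (i+2+(k':ℕ)) (by omega) (by omega) (by omega)
    have b2 := B2 (i+2+(k:ℕ)) (i+2+(k':ℕ)) (by omega) (by omega) (by omega)
    have b3 := B3 (i+2+(k:ℕ)) (i+2+(k':ℕ)) (by omega) (by omega) (by omega)
    simp only []
    split_ifs with ha hb hb
    · have := b2 ha hb; omega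
    · omega
    · exact ((b3 (by omega) hb).elim : _)
    · have := b1 (by omega) (by omega); omega
  have hgmono : StrictMono (fun k : Fin (n - (i+2)) =>
      if v < Fv n i v (i + 2 + (k:ℕ)) then Fv n i v (i + 2 + (k:ℕ)) - v
      else Fv n i v (i + 2 + (k:ℕ)) + (n - v)) := by
    intro k k' hkk
    have hkk' := Fin.lt_def.mp hkk
    have hk := k.2; have hk' := k'.2
    have s1 := Fv_spec n i v (i+2+(k:ℕ)) hiv hv (by omega)
    have s2 := Fv_spec n i v (i+2+(k':ℕ)) hiv hv (by omega)
    simp only []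
    split_ifs <;> omega
  have hrange : Set.range (fun k : Fin (n - (i+2)) =>
      if v < P (i + 2 + (k:ℕ)) then P (i + 2 + (k:ℕ)) - v else P (i + 2 + (k:ℕ)) + (n - v))
      = Set.range (fun k : Fin (n - (i+2)) =>
      if v < Fv n i v (i + 2 + (k:ℕ)) then Fv n i v (i + 2 + (k:ℕ)) - v
      else Fv n i v (i + 2 + (k:ℕ)) + (n - v)) := by
    ext w
    simp only [Set.mem_range]
    constructor
    · rintro ⟨k, rfl⟩
      have hk := k.2
      have hval := valgt (i+2+(k:ℕ)) (by omega) (by omega)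
      obtain ⟨t, ht⟩ : ∃ t, t = if v < P (i+2+(k:ℕ)) then P (i+2+(k:ℕ)) - v + i + 1
          else P (i+2+(k:ℕ)) + (n - v) := ⟨_, rfl⟩
      have htr : i + 2 ≤ t ∧ t < n ∧ Fv n i v t = P (i+2+(k:ℕ)) := by
        rw [ht]; simp only [Fv]; split_ifs <;> omega
      refine ⟨⟨t - (i+2), by omega⟩, ?_⟩
      simp only []
      rw [show i + 2 + ((⟨t - (i+2), by omega⟩ : Fin (n - (i+2))) : ℕ) = t from by
        simp only [Fin.val_mk]; omega, htr.2.2]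
    · rintro ⟨k, rfl⟩
      have hk := k.2
      have s1 := Fv_spec n i v (i+2+(k:ℕ)) hiv hv (by omega)
      obtain ⟨q, hq1, hqn, hPq⟩ := pos (Fv n i v (i+2+(k:ℕ))) (by omega) (by omega) (by omega)
      have hqne : q ≠ i + 1 := fun h => by rw [h, hPsucc] at hPq; omega
      refine ⟨⟨q - (i+2), by omega⟩, ?_⟩
      simp only []
      rw [show i + 2 + ((⟨q - (i+2), by omega⟩ : Fin (n - (i+2))) : ℕ) = q from by
        simp only [Fin.val_mk]; omega, hPq]
  haveI : WellFoundedLT (Fin (n - (i+2))) := inferInstance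
  have hfg := ((StrictMono.range_inj (β := Fin (n - (i+2))) (γ := ℕ) hfmono hgmono).mp hrange)
  have hPFv : ∀ t, t < n → P t = Fv n i v t := by
    intro t htn
    rcases Nat.lt_trichotomy t i with h | h | h
    · rw [hmin t h]; simp only [Fv]; rw [if_pos h]
    · rw [h]
      have hFvi : Fv n i v i = v := by simp only [Fv]; split_ifs <;> omega
      rw [hFvi]
      exact hvdef
    · rcases Nat.lt_or_ge t (i+2) with h2 | h2
      · have hti : t = i + 1 := by omega
        subst hti
        rw [hPsucc]
        simp only [Fv]; split_ifs <;> omega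
      · have := congrFun hfg ⟨t - (i+2), by omega⟩
        simp only [] at this
        rw [show i + 2 + ((⟨t - (i+2), by omega⟩ : Fin (n - (i+2))) : ℕ) = t from by
          simp only [Fin.val_mk]; omega] at this
        have hPt := valgt t h2 htn
        have s1 := Fv_spec n i v t hiv hv htn
        split_ifs at this <;> omega
  exact Equiv.ext fun x => Fin.ext (by
    rw [sigmaP_apply, ← hPFv x.1 x.2, hPdef x.1 x.2])


lemma one_mem {n : ℕ} :
    IsFishburn (1 : Equiv.Perm (Fin n)) ∧ Avoids (1 : Equiv.Perm (Fin n)) ![3,2,1] ∧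
    Avoids (1 : Equiv.Perm (Fin n)) ![2,1,4,3] ∧ Avoids (1 : Equiv.Perm (Fin n)) ![3,1,2,4] := by
  refine ⟨?_, ?_, ?_, ?_⟩
  · rintro ⟨i, j, hij, hj, h1, h2, h3⟩
    simp only [Equiv.Perm.coe_one, id_eq, Fin.mk_lt_mk] at h2
    omega
  · intro h
    obtain ⟨a, b, c, hab, hbc, h1, h2⟩ := un_321 _ h
    simp only [Equiv.Perm.coe_one, id_eq] at h1
    exact absurd h1 (not_lt.mpr hab.le)
  · intro h
    obtain ⟨a, b, c, d, hab, hbc, hcd, h1, h2, h3⟩ := un_2143 _ h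
    simp only [Equiv.Perm.coe_one, id_eq] at h1
    exact absurd h1 (not_lt.mpr hab.le)
  · intro h
    obtain ⟨a, b, c, d, hab, hbc, hcd, h1, h2, h3⟩ := un_3124 _ h
    simp only [Equiv.Perm.coe_one, id_eq] at h2
    exact absurd h2 (not_lt.mpr (hab.trans hbc).le)

def Phi (n : ℕ) (o : Option {q : Fin n × Fin n // q.1 < q.2}) : Equiv.Perm (Fin n) :=
  match o with
  | none => 1
  | some q => sigmaP n q.1.1 q.1.2 q.2 q.1.2.2

lemma sigmaP_ne_one (n i v : ℕ) (hi : i < v) (hv : v < n) : sigmaP n i v hi hv ≠ 1 := by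
  intro h
  have := congrArg (fun e : Equiv.Perm (Fin n) => ((e ⟨i, by omega⟩ : Fin n) : ℕ)) h
  simp only [sigmaP_apply, Equiv.Perm.coe_one, id_eq] at this
  have hs := Fv_spec n i v i hi hv (by omega)
  omega

lemma sigmaP_inj (n i v i' v' : ℕ) (hi : i < v) (hv : v < n) (hi' : i' < v') (hv' : v' < n)
    (h : sigmaP n i v hi hv = sigmaP n i' v' hi' hv') : i = i' ∧ v = v' := by
  have e1 := congrArg (fun e : Equiv.Perm (Fin n) => ((e ⟨i, by omega⟩ : Fin n) : ℕ)) h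
  have e2 := congrArg (fun e : Equiv.Perm (Fin n) => ((e ⟨i', by omega⟩ : Fin n) : ℕ)) h
  simp only [sigmaP_apply] at e1 e2
  have s1 := Fv_spec n i v i hi hv (by omega)
  have s2 := Fv_spec n i' v' i hi' hv' (by omega)
  have s3 := Fv_spec n i v i' hi hv (by omega)
  have s4 := Fv_spec n i' v' i' hi' hv' (by omega)
  omega

theorem fishburn_321_2143_3124 (n : ℕ) :
    {π : Equiv.Perm (Fin n) | IsFishburn π ∧ Avoids π ![3, 2, 1] ∧ Avoids π ![2, 1, 4, 3] ∧ Avoids π ![3, 1, 2, 4]}.ncard = n.choose 2 + 1 := by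
  classical
  have hrange : {π : Equiv.Perm (Fin n) | IsFishburn π ∧ Avoids π ![3, 2, 1] ∧
      Avoids π ![2, 1, 4, 3] ∧ Avoids π ![3, 1, 2, 4]} = Set.range (Phi n) := by
    ext π
    constructor
    · rintro ⟨hfb, h1, h2, h3⟩
      by_cases hne : π = 1
      · exact ⟨none, hne.symm⟩
      · obtain ⟨i, v, hi, hv, heq⟩ := mem_char π hfb h1 h2 h3 hne
        exact ⟨some ⟨(⟨i, by omega⟩, ⟨v, hv⟩), Fin.mk_lt_mk.mpr hi⟩, heq.symm⟩
    · rintro ⟨o, rfl⟩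
      match o with
      | none => exact one_mem
      | some q =>
        exact ⟨sigmaP_fishburn n q.1.1 q.1.2 q.2 q.1.2.2,
          sigmaP_av321 n q.1.1 q.1.2 q.2 q.1.2.2,
          sigmaP_av2143 n q.1.1 q.1.2 q.2 q.1.2.2,
          sigmaP_av3124 n q.1.1 q.1.2 q.2 q.1.2.2⟩
  have hinj : Function.Injective (Phi n) := by
    intro o1 o2 h
    rcases o1 with _ | ⟨⟨a, b⟩, hq⟩ <;> rcases o2 with _ | ⟨⟨a', b'⟩, hq'⟩
    · rfl
    · exact absurd h.symm (sigmaP_ne_one n a' b' hq' b'.2)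
    · exact absurd h (sigmaP_ne_one n a b hq b.2)
    · obtain ⟨h1, h2⟩ := sigmaP_inj n a b a' b' hq b.2 hq' b'.2 h
      simp only [Option.some.injEq, Subtype.mk.injEq, Prod.mk.injEq]
      exact ⟨Fin.ext h1, Fin.ext h2⟩
  have hcard : Nat.card (Option {q : Fin n × Fin n // q.1 < q.2}) = n.choose 2 + 1 := by
    rw [Nat.card_eq_fintype_card, Fintype.card_option]
    congr 1
    have E : {q : Fin n × Fin n // q.1 < q.2} ≃ (Σ v : Fin n, Fin v.val) :=
      { toFun := fun q => ⟨q.1.2, ⟨q.1.1.val, q.2⟩⟩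
        invFun := fun s => ⟨(⟨s.2.val, lt_trans s.2.2 s.1.2⟩, s.1), s.2.2⟩
        left_inv := fun q => rfl
        right_inv := fun s => rfl }
    rw [Fintype.card_congr E, Fintype.card_sigma]
    simp only [Fintype.card_fin]
    rw [Fin.sum_univ_eq_sum_range (fun v => v) n, Nat.choose_two_right]
    have := Finset.sum_range_id_mul_two n
    omega
  rw [hrange, ← Set.image_univ, Set.ncard_image_of_injective _ hinj, Set.ncard_univ, hcard]
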